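/- Let r̄ > 0, and let f_A, f_R : [0,∞) → ℝ be continuous with f_A(ρ) < 0 for all ρ > 0, f_R ≥ 0, and f_R(ρ) > 0 for all ρ ∈ [0,d_a) for some d_a > 0. Assume ∫_{π/2}^{3π/2} (f_A + f_R)(r̄(1 − sin φ)) (1 − sin φ) |cos φ| dφ < 0. Then there exists exactly one χ ∈ ℝ such that ∫_{π/2}^{3π/2} (χ f_A + f_R)(r̄(1 − sin φ)) (1 − sin φ) |cos φ| dφ = 0; it is given by χ̄ = − (∫_{π/2}^{3π/2} f_R(r̄(1 − sin φ)) (1 − sin φ) |cos φ| dφ) / (∫_{π/2}^{3π/2} f_A(r̄(1 − sin φ)) (1 − sin φ) |cos φ| dφ), and it satisfies 0 < χ̄ < 1. -/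

import Mathlib

open Real

/-- Let `r̄ > 0`, `f_A < 0` on `(0,∞)`, `f_R ≥ 0` with
`f_R > 0` on `[0,d_a)`, and suppose
`∫_{π/2}^{3π/2} (f_A + f_R)(r̄(1 − sin φ)) (1 − sin φ) |cos φ| dφ < 0`.
Then there is exactly one `χ ∈ ℝ` with
`∫_{π/2}^{3π/2} (χ f_A + f_R)(r̄(1 − sin φ)) (1 − sin φ) |cos φ| dφ = 0`,
given by `χ̄ = −(∫ f_R ⋯)/(∫ f_A ⋯)`, and it satisfies `0 < χ̄ < 1`. -/
theorem pseudo_ellipse_unique_chi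
    (rbar : ℝ) (hrbar : 0 < rbar)
    (fA fR : ℝ → ℝ)
    (hfA : ContinuousOn fA (Set.Ici 0)) (hfR : ContinuousOn fR (Set.Ici 0))
    (hfAneg : ∀ ρ : ℝ, 0 < ρ → fA ρ < 0)
    (hfRnonneg : ∀ ρ ∈ Set.Ici (0:ℝ), 0 ≤ fR ρ)
    (da : ℝ) (hda : 0 < da)
    (hfRpos : ∀ ρ ∈ Set.Ico (0:ℝ) da, 0 < fR ρ)
    (hattr : ∫ φ in (Real.pi / 2)..(3 * Real.pi / 2),
        (fA (rbar * (1 - Real.sin φ)) + fR (rbar * (1 - Real.sin φ)))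
          * (1 - Real.sin φ) * |Real.cos φ| < 0) :
    (∫ φ in (Real.pi / 2)..(3 * Real.pi / 2),
        ((-(∫ φ' in (Real.pi / 2)..(3 * Real.pi / 2),
              fR (rbar * (1 - Real.sin φ')) * (1 - Real.sin φ') * |Real.cos φ'|)
           / (∫ φ' in (Real.pi / 2)..(3 * Real.pi / 2),
              fA (rbar * (1 - Real.sin φ')) * (1 - Real.sin φ') * |Real.cos φ'|))
          * fA (rbar * (1 - Real.sin φ)) + fR (rbar * (1 - Real.sin φ)))
          * (1 - Real.sin φ) * |Real.cos φ| = 0)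
    ∧ (∀ χ : ℝ,
        (∫ φ in (Real.pi / 2)..(3 * Real.pi / 2),
          (χ * fA (rbar * (1 - Real.sin φ)) + fR (rbar * (1 - Real.sin φ)))
            * (1 - Real.sin φ) * |Real.cos φ| = 0) →
        χ = -(∫ φ' in (Real.pi / 2)..(3 * Real.pi / 2),
              fR (rbar * (1 - Real.sin φ')) * (1 - Real.sin φ') * |Real.cos φ'|)
           / (∫ φ' in (Real.pi / 2)..(3 * Real.pi / 2),
              fA (rbar * (1 - Real.sin φ')) * (1 - Real.sin φ') * |Real.cos φ'|))
    ∧ 0 < -(∫ φ' in (Real.pi / 2)..(3 * Real.pi / 2),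
              fR (rbar * (1 - Real.sin φ')) * (1 - Real.sin φ') * |Real.cos φ'|)
           / (∫ φ' in (Real.pi / 2)..(3 * Real.pi / 2),
              fA (rbar * (1 - Real.sin φ')) * (1 - Real.sin φ') * |Real.cos φ'|)
    ∧ -(∫ φ' in (Real.pi / 2)..(3 * Real.pi / 2),
              fR (rbar * (1 - Real.sin φ')) * (1 - Real.sin φ') * |Real.cos φ'|)
           / (∫ φ' in (Real.pi / 2)..(3 * Real.pi / 2),
              fA (rbar * (1 - Real.sin φ')) * (1 - Real.sin φ') * |Real.cos φ'|) < 1 := by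
  have hpi := Real.pi_gt_three
  have hlt : Real.pi / 2 < 3 * Real.pi / 2 := by nlinarith
  -- the inner map
  set u : ℝ → ℝ := fun φ => rbar * (1 - Real.sin φ) with hu
  have hucont : Continuous u := by
    exact continuous_const.mul (continuous_const.sub Real.continuous_sin)
  have humem : ∀ φ : ℝ, u φ ∈ Set.Ici (0:ℝ) := by
    intro φ
    have := Real.sin_le_one φ
    show (0:ℝ) ≤ rbar * (1 - Real.sin φ)
    exact mul_nonneg hrbar.le (by linarith)
  -- generic integrability
  have hint : ∀ f : ℝ → ℝ, ContinuousOn f (Set.Ici 0) → ∀ a b : ℝ,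
      IntervalIntegrable (fun φ => f (u φ) * (1 - Real.sin φ) * |Real.cos φ|)
        MeasureTheory.volume a b := by
    intro f hf a b
    apply ContinuousOn.intervalIntegrable
    apply ContinuousOn.mono _ (Set.subset_univ _)
    exact ((hf.comp hucont.continuousOn (fun x _ => humem x)).mul
      (continuous_const.sub Real.continuous_sin).continuousOn).mul
      Real.continuous_cos.abs.continuousOn
  have intA := hint fA hfA (Real.pi / 2) (3 * Real.pi / 2)
  have intR := hint fR hfR (Real.pi / 2) (3 * Real.pi / 2)
  set A : ℝ := ∫ φ' in (Real.pi / 2)..(3 * Real.pi / 2),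
      fA (rbar * (1 - Real.sin φ')) * (1 - Real.sin φ') * |Real.cos φ'| with hAdef
  set R : ℝ := ∫ φ' in (Real.pi / 2)..(3 * Real.pi / 2),
      fR (rbar * (1 - Real.sin φ')) * (1 - Real.sin φ') * |Real.cos φ'| with hRdef
  -- pointwise facts on the open interval
  have hcosneg : ∀ x ∈ Set.Ioo (Real.pi / 2) (3 * Real.pi / 2), Real.cos x < 0 := by
    intro x hx
    exact Real.cos_neg_of_pi_div_two_lt_of_lt hx.1 (by linarith [hx.2])
  have hsinlt : ∀ x ∈ Set.Ioo (Real.pi / 2) (3 * Real.pi / 2), Real.sin x < 1 := by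
    intro x hx
    rcases (Real.sin_le_one x).lt_or_eq with h | h
    · exact h
    · exfalso
      have h2 := Real.sin_sq_add_cos_sq x
      have := hcosneg x hx
      nlinarith
  -- A < 0
  have hA : A < 0 := by
    have hpos := intervalIntegral.intervalIntegral_pos_of_pos_on
      (f := fun φ => -(fA (u φ) * (1 - Real.sin φ) * |Real.cos φ|)) intA.neg ?_ hlt
    · rw [intervalIntegral.integral_neg] at hpos
      simpa [hAdef] using (neg_pos.mp hpos)
    · intro x hx
      have hc := hcosneg x hx
      have hs := hsinlt x hx
      have hρ : 0 < u x := by simp only [hu]; nlinarith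
      have hfa := hfAneg _ hρ
      have habs : 0 < |Real.cos x| := abs_pos.mpr (ne_of_lt hc)
      show 0 < -(fA (u x) * (1 - Real.sin x) * |Real.cos x|)
      have h1s : 0 < 1 - Real.sin x := by linarith
      nlinarith [mul_pos (mul_pos (neg_pos.mpr hfa) h1s) habs]
  have hAne : A ≠ 0 := ne_of_lt hA
  -- R > 0
  have hR : 0 < R := by
    -- find δ such that u x < da near π/2
    have hcA : ContinuousAt u (Real.pi / 2) := hucont.continuousAt
    have hu0 : u (Real.pi / 2) = 0 := by simp [hu, Real.sin_pi_div_two]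
    obtain ⟨δ, hδpos, hδ⟩ := Metric.continuousAt_iff.mp hcA da hda
    set c : ℝ := Real.pi / 2 + min δ 1 / 2 with hc
    have hminpos : 0 < min δ 1 := lt_min hδpos one_pos
    have hc1 : Real.pi / 2 < c := by simp only [hc]; linarith
    have hc2 : c < 3 * Real.pi / 2 := by
      have : min δ 1 ≤ 1 := min_le_right _ _
      simp only [hc]; nlinarith
    have hsplit : R = (∫ φ in (Real.pi / 2)..c,
          fR (u φ) * (1 - Real.sin φ) * |Real.cos φ|)
        + ∫ φ in c..(3 * Real.pi / 2),
          fR (u φ) * (1 - Real.sin φ) * |Real.cos φ| := by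
      rw [hRdef]
      exact (intervalIntegral.integral_add_adjacent_intervals
        (hint fR hfR _ _) (hint fR hfR _ _)).symm
    have h1 : 0 < ∫ φ in (Real.pi / 2)..c,
        fR (u φ) * (1 - Real.sin φ) * |Real.cos φ| := by
      apply intervalIntegral.intervalIntegral_pos_of_pos_on (hint fR hfR _ _) _ hc1
      intro x hx
      have hx' : x ∈ Set.Ioo (Real.pi / 2) (3 * Real.pi / 2) := ⟨hx.1, lt_trans hx.2 hc2⟩
      have hcos := hcosneg x hx'
      have hsin := hsinlt x hx'
      have habs : 0 < |Real.cos x| := abs_pos.mpr (ne_of_lt hcos)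
      have hdx : dist x (Real.pi / 2) < δ := by
        have : min δ 1 ≤ δ := min_le_left _ _
        rw [Real.dist_eq, abs_of_pos (by linarith [hx.1] : (0:ℝ) < x - Real.pi / 2)]
        have := hx.2
        simp only [hc] at this
        linarith
      have hud : u x < da := by
        have := hδ hdx
        rw [Real.dist_eq, hu0, sub_zero] at this
        calc u x ≤ |u x| := le_abs_self _
        _ < da := this
      have hfr : 0 < fR (u x) := hfRpos _ ⟨humem x, hud⟩
      have h1s : 0 < 1 - Real.sin x := by linarith
      positivity
    have h2 : 0 ≤ ∫ φ in c..(3 * Real.pi / 2),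
        fR (u φ) * (1 - Real.sin φ) * |Real.cos φ| := by
      apply intervalIntegral.integral_nonneg (le_of_lt hc2)
      intro x _
      have hs := Real.sin_le_one x
      exact mul_nonneg (mul_nonneg (hfRnonneg _ (humem x)) (by linarith)) (abs_nonneg _)
    linarith [hsplit ▸ (by linarith : 0 < (∫ φ in (Real.pi / 2)..c,
        fR (u φ) * (1 - Real.sin φ) * |Real.cos φ|)
        + ∫ φ in c..(3 * Real.pi / 2), fR (u φ) * (1 - Real.sin φ) * |Real.cos φ|)]
  -- linearity
  have hlin : ∀ χ : ℝ, (∫ φ in (Real.pi / 2)..(3 * Real.pi / 2),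
      (χ * fA (rbar * (1 - Real.sin φ)) + fR (rbar * (1 - Real.sin φ)))
        * (1 - Real.sin φ) * |Real.cos φ|) = χ * A + R := by
    intro χ
    have heq : (fun φ => (χ * fA (rbar * (1 - Real.sin φ)) + fR (rbar * (1 - Real.sin φ)))
        * (1 - Real.sin φ) * |Real.cos φ|)
      = fun φ => χ * (fA (u φ) * (1 - Real.sin φ) * |Real.cos φ|)
        + fR (u φ) * (1 - Real.sin φ) * |Real.cos φ| := by
      funext φ; simp only [hu]; ring
    rw [show (∫ φ in (Real.pi / 2)..(3 * Real.pi / 2),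
      (χ * fA (rbar * (1 - Real.sin φ)) + fR (rbar * (1 - Real.sin φ)))
        * (1 - Real.sin φ) * |Real.cos φ|)
      = ∫ φ in (Real.pi / 2)..(3 * Real.pi / 2),
        (χ * (fA (u φ) * (1 - Real.sin φ) * |Real.cos φ|)
          + fR (u φ) * (1 - Real.sin φ) * |Real.cos φ|) from by rw [heq]]
    rw [intervalIntegral.integral_add (intA.const_mul χ) intR,
      intervalIntegral.integral_const_mul]
  -- A + R < 0
  have hAR : A + R < 0 := by
    have := hlin 1
    simp only [one_mul] at this
    calc A + R = ∫ φ in (Real.pi / 2)..(3 * Real.pi / 2),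
        (1 * fA (rbar * (1 - Real.sin φ)) + fR (rbar * (1 - Real.sin φ)))
          * (1 - Real.sin φ) * |Real.cos φ| := by rw [hlin 1]; ring
      _ < 0 := by
        refine lt_of_le_of_lt (le_of_eq ?_) hattr
        congr 1; funext φ; ring
  refine ⟨?_, ?_, ?_, ?_⟩
  · rw [hlin (-R / A)]
    field_simp
    ring
  · intro χ hχ
    rw [hlin χ] at hχ
    rw [eq_div_iff hAne]
    linarith
  · have : R / A < 0 := div_neg_of_pos_of_neg hR hA
    rw [neg_div]
    linarith
  · have hkey : -R / A - 1 = -(A + R) / A := by field_simp; ring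
    have : -(A + R) / A < 0 := div_neg_of_pos_of_neg (by linarith) hA
    linarith
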